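/- Let M be a matroid, ψ: E(M) → Γ a group labeling, F ⊆ Γ a finite set, and suppose M has an F-avoiding basis. If there exists a basis A such that |A \ A'| ≥ |F| + 1 for every F-avoiding basis A', then there also exist a basis B and an F-avoiding basis B* such that |B \ B*| = |F| + 1 and |B \ B'| ≥ |F| + 1 for every F-avoiding basis B'. -/

import Mathlib

private lemma stmt7_aux {α Γ : Type*} [AddCommGroup Γ] (M : Matroid α) [M.Finite]
    (ψ : α → Γ) (F : Finset Γ) :
    ∀ n : ℕ, ∀ B B' : Set α, M.IsBase B →
      (∀ A', M.IsBase A' → (∑ᶠ e ∈ A', ψ e) ∉ F → F.card + 1 ≤ (B \ A').ncard) →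
      M.IsBase B' → (∑ᶠ e ∈ B', ψ e) ∉ F → (B \ B').ncard ≤ n →
    ∃ C Cstar : Set α, M.IsBase C ∧ M.IsBase Cstar ∧ (∑ᶠ e ∈ Cstar, ψ e) ∉ F ∧
      (C \ Cstar).ncard = F.card + 1 ∧
      (∀ B'', M.IsBase B'' → (∑ᶠ e ∈ B'', ψ e) ∉ F → F.card + 1 ≤ (C \ B'').ncard) := by
  intro n
  induction n with
  | zero =>
    intro B B' hB hfar hB' hB'F hle
    have := hfar B' hB' hB'F
    omega
  | succ n ih =>
    intro B B' hB hfar hB' hB'F hle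
    have hge := hfar B' hB' hB'F
    rcases eq_or_lt_of_le hge with heq | hlt
    · exact ⟨B, B', hB, hB', hB'F, heq.symm, hfar⟩
    -- pick e ∈ B \ B'
    have hBfin : B.Finite := hB.finite
    have hne : (B \ B').Nonempty := by
      rw [Set.nonempty_iff_ne_empty]
      intro h
      rw [h, Set.ncard_empty] at hlt
      omega
    obtain ⟨e, he⟩ := hne
    obtain ⟨f, hf, hB₁⟩ := hB.exchange hB' he
    set B₁ : Set α := insert f (B \ {e}) with hB₁def
    have hdiff : B₁ \ B' = (B \ B') \ {e} := by
      ext x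
      simp only [hB₁def, Set.mem_diff, Set.mem_insert_iff, Set.mem_singleton_iff]
      constructor
      · rintro ⟨hx1 | ⟨hxB, hxe⟩, hx2⟩
        · exact absurd (hx1 ▸ hf.1) hx2
        · exact ⟨⟨hxB, hx2⟩, hxe⟩
      · rintro ⟨⟨hxB, hx2⟩, hxe⟩
        exact ⟨Or.inr ⟨hxB, hxe⟩, hx2⟩
    have hcard : (B₁ \ B').ncard = (B \ B').ncard - 1 := by
      rw [hdiff]
      rw [Set.ncard_diff_singleton_of_mem he]
    by_cases hfar₁ : ∀ A', M.IsBase A' → (∑ᶠ e ∈ A', ψ e) ∉ F → F.card + 1 ≤ (B₁ \ A').ncard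
    · exact ih B₁ B' hB₁ hfar₁ hB' hB'F (by omega)
    · push_neg at hfar₁
      obtain ⟨A'', hA'', hA''F, hclose⟩ := hfar₁
      -- B \ A'' ⊆ insert e (B₁ \ A'')
      have hsub : B \ A'' ⊆ insert e (B₁ \ A'') := by
        rintro x ⟨hxB, hxA⟩
        rcases eq_or_ne x e with rfl | hxe
        · exact Set.mem_insert _ _
        · exact Set.mem_insert_of_mem _ ⟨Or.inr ⟨hxB, hxe⟩, hxA⟩
      have hB₁fin : B₁.Finite := hB₁.finite
      have h1 : (B \ A'').ncard ≤ (B₁ \ A'').ncard + 1 := by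
        calc (B \ A'').ncard ≤ (insert e (B₁ \ A'')).ncard :=
              Set.ncard_le_ncard hsub (hB₁fin.diff.insert e)
          _ ≤ (B₁ \ A'').ncard + 1 := Set.ncard_insert_le _ _
      have h2 := hfar A'' hA'' hA''F
      exact ⟨B, A'', hB, hA'', hA''F, by omega, hfar⟩

/-- If an `F`-avoiding basis exists and some basis `A` satisfies
`|A \ A'| ≥ |F| + 1` for all `F`-avoiding bases `A'`, then there are a basis `B` and an
`F`-avoiding basis `B*` with `|B \ B*| = |F| + 1` and `|B \ B'| ≥ |F| + 1` for all
`F`-avoiding bases `B'`. -/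
theorem stmt_7 {α Γ : Type*} [AddCommGroup Γ] (M : Matroid α) [M.Finite]
    (ψ : α → Γ) (F : Finset Γ)
    (hex : ∃ B', M.IsBase B' ∧ (∑ᶠ e ∈ B', ψ e) ∉ F)
    (A : Set α) (hA : M.IsBase A)
    (hfar : ∀ A', M.IsBase A' → (∑ᶠ e ∈ A', ψ e) ∉ F → F.card + 1 ≤ (A \ A').ncard) :
    ∃ B Bstar : Set α, M.IsBase B ∧ M.IsBase Bstar ∧ (∑ᶠ e ∈ Bstar, ψ e) ∉ F ∧
      (B \ Bstar).ncard = F.card + 1 ∧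
      (∀ B', M.IsBase B' → (∑ᶠ e ∈ B', ψ e) ∉ F → F.card + 1 ≤ (B \ B').ncard) := by
  obtain ⟨B', hB', hB'F⟩ := hex
  exact stmt7_aux M ψ F ((A \ B').ncard) A B' hA hfar hB' hB'F le_rfl
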